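/- Let U ~ N(0, I_d), let L: ℝ^d → ℝ be G-Lipschitz, Q a quantizer with ‖Q(x) − Q(y)‖₂ ≤ ‖x − y‖₂ + Δ√d, and g(U) = [(L(Q(W+εU)) − L(Q(W−εU)))/(2ε)] U. Then E‖g(U)‖₂² ≤ 2G²(d² + 2d) + G²Δ²d²/(2ε²). -/

import Mathlib

open MeasureTheory ProbabilityTheory

noncomputable def stdGaussianVec (d : ℕ) : Measure (EuclideanSpace ℝ (Fin d)) :=
  (MeasureTheory.Measure.pi fun _ : Fin d => gaussianReal 0 1).map (MeasurableEquiv.toLp 2 (Fin d → ℝ))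

open Real
open scoped ENNReal NNReal

-- integrability of x^n * exp(-x^2/2)
lemma integ_pow_exp (n : ℕ) : Integrable (fun x : ℝ => x ^ n * Real.exp (-(1/2) * x ^ 2)) := by
  have := integrable_rpow_mul_exp_neg_mul_sq (b := 1/2) (by norm_num) (s := (n : ℝ)) (lt_of_lt_of_le (by norm_num) (Nat.cast_nonneg n))
  simpa [Real.rpow_natCast] using this

lemma gauss_ibp (m : ℕ) :
    ∫ x : ℝ, x ^ (m + 2) * Real.exp (-(1/2) * x ^ 2)
      = (m + 1 : ℝ) * ∫ x : ℝ, x ^ m * Real.exp (-(1/2) * x ^ 2) := by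
  have hu : ∀ x : ℝ, HasDerivAt (fun y : ℝ => y ^ (m+1)) ((m+1 : ℝ) * x ^ m) x := by
    intro x
    simpa using hasDerivAt_pow (m+1) x
  have hv : ∀ x : ℝ, HasDerivAt (fun y : ℝ => -Real.exp (-(1/2) * y ^ 2))
      (x * Real.exp (-(1/2) * x ^ 2)) x := by
    intro x
    have h : HasDerivAt (fun y : ℝ => -(1/2) * y ^ 2) (-(1/2) * (2 * x ^ 1)) x :=
      (hasDerivAt_pow 2 x).const_mul _
    have := (h.exp).fun_neg
    refine this.congr_deriv ?_
    ring
  have key := integral_mul_deriv_eq_deriv_mul_of_integrable (fun x _ => hu x) (fun x _ => hv x)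
    (huv' := by
      have := integ_pow_exp (m+2)
      apply this.congr
      filter_upwards with x
      simp only [Pi.mul_apply, Pi.neg_apply]; ring)
    (hu'v := by
      have := ((integ_pow_exp m).const_mul (m+1 : ℝ)).neg
      apply this.congr
      filter_upwards with x
      simp only [Pi.mul_apply, Pi.neg_apply]; ring)
    (huv := by
      have := ((integ_pow_exp (m+1))).neg
      apply this.congr
      filter_upwards with x
      simp only [Pi.mul_apply, Pi.neg_apply]; ring)
  have l1 : ∫ x : ℝ, x ^ (m+1) * (x * Real.exp (-(1/2) * x ^ 2))
      = ∫ x : ℝ, x ^ (m + 2) * Real.exp (-(1/2) * x ^ 2) := by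
    congr 1; funext x; ring
  have l2 : ∫ x : ℝ, (m+1 : ℝ) * x ^ m * -Real.exp (-(1/2) * x ^ 2)
      = -((m+1 : ℝ) * ∫ x : ℝ, x ^ m * Real.exp (-(1/2) * x ^ 2)) := by
    rw [← integral_const_mul, ← MeasureTheory.integral_neg]
    congr 1; funext x; ring
  rw [l1, l2] at key
  linarith [key]

lemma gauss_J0 : ∫ x : ℝ, Real.exp (-(1/2) * x ^ 2) = Real.sqrt (2 * Real.pi) := by
  have := integral_gaussian (1/2)
  rw [this]; rw [div_div_eq_mul_div, div_one]; rw [mul_comm]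

lemma gaussianReal_eq_withDensity :
    gaussianReal 0 1 = volume.withDensity
      (fun x => ((Real.toNNReal (gaussianPDFReal 0 1 x) : ℝ≥0) : ℝ≥0∞)) := by
  rw [gaussianReal_of_var_ne_zero 0 one_ne_zero]
  congr 1

lemma meas_toNNReal_pdf : Measurable (fun x => Real.toNNReal (gaussianPDFReal 0 1 x)) :=
  (measurable_gaussianPDFReal 0 1).real_toNNReal

lemma integral_gaussianReal_eq (g : ℝ → ℝ) :
    ∫ x, g x ∂(gaussianReal 0 1) = ∫ x, gaussianPDFReal 0 1 x * g x := by
  rw [gaussianReal_eq_withDensity, integral_withDensity_eq_integral_smul meas_toNNReal_pdf]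
  congr 1
  funext x
  simp [NNReal.smul_def, Real.coe_toNNReal _ (gaussianPDFReal_nonneg 0 1 x)]

lemma integrable_pow_gaussianReal (n : ℕ) :
    Integrable (fun x : ℝ => x ^ n) (gaussianReal 0 1) := by
  rw [gaussianReal_eq_withDensity,
    integrable_withDensity_iff_integrable_smul meas_toNNReal_pdf]
  have := integ_pow_exp n
  apply ((integ_pow_exp n).const_mul ((Real.sqrt (2 * Real.pi))⁻¹)).congr
  filter_upwards with x
  rw [NNReal.smul_def, Real.coe_toNNReal _ (gaussianPDFReal_nonneg 0 1 x),
    gaussianPDFReal]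
  push_cast
  simp only [smul_eq_mul, mul_one, sub_zero]
  ring_nf

lemma gauss_moment (n : ℕ) : ∫ x, x ^ n ∂(gaussianReal 0 1)
    = (Real.sqrt (2 * Real.pi))⁻¹ * ∫ x, x ^ n * Real.exp (-(1/2) * x ^ 2) := by
  rw [integral_gaussianReal_eq, ← integral_const_mul]
  congr 1
  funext x
  rw [gaussianPDFReal]
  push_cast
  simp only [mul_one, sub_zero]
  ring_nf

lemma sqrt_two_pi_ne : Real.sqrt (2 * Real.pi) ≠ 0 := by
  positivity

lemma gauss_m2 : ∫ x, x ^ 2 ∂(gaussianReal 0 1) = 1 := by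
  have h := gauss_ibp 0
  push_cast at h
  simp only [pow_zero, one_mul, zero_add] at h
  rw [gauss_moment, h, gauss_J0, inv_mul_cancel₀ sqrt_two_pi_ne]

lemma gauss_m4 : ∫ x, x ^ 4 ∂(gaussianReal 0 1) = 3 := by
  have h := gauss_ibp 2
  have h0 := gauss_ibp 0
  simp only [pow_zero, one_mul, zero_add] at h0
  push_cast at h h0
  simp only [pow_zero, one_mul, zero_add] at h0
  rw [gauss_moment, h, h0, gauss_J0]
  have := sqrt_two_pi_ne
  field_simp
  ring

lemma pi_integrable {ι : Type*} [Fintype ι] (f : ι → ℝ → ℝ)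
    (hf : ∀ i, Integrable (f i) (gaussianReal 0 1)) :
    Integrable (fun x : ι → ℝ => ∏ i, f i (x i))
      (Measure.pi fun _ : ι => gaussianReal 0 1) := by
  letI : MeasureSpace ℝ := ⟨gaussianReal 0 1⟩
  haveI : SigmaFinite (volume : Measure ℝ) :=
    (inferInstance : SigmaFinite (gaussianReal 0 1))
  exact Integrable.fintype_prod hf

lemma pi_integral {ι : Type*} [Fintype ι] (f : ι → ℝ → ℝ) :
    ∫ x : ι → ℝ, ∏ i, f i (x i) ∂(Measure.pi fun _ : ι => gaussianReal 0 1)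
      = ∏ i, ∫ x, f i x ∂(gaussianReal 0 1) := by
  letI : MeasureSpace ℝ := ⟨gaussianReal 0 1⟩
  haveI : SigmaFinite (volume : Measure ℝ) :=
    (inferInstance : SigmaFinite (gaussianReal 0 1))
  exact integral_fintype_prod_eq_prod f


section Coord
variable {d : ℕ} (i j : Fin d)

lemma coord_pair_eq (u : EuclideanSpace ℝ (Fin d)) :
    (u i) ^ 2 * (u j) ^ 2
      = ∏ k, ((if k = i then (u k) ^ 2 else 1) * (if k = j then (u k) ^ 2 else 1)) := by
  rw [Finset.prod_mul_distrib, Finset.prod_ite_eq' Finset.univ i (fun k => (u k)^2),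
    Finset.prod_ite_eq' Finset.univ j (fun k => (u k)^2)]
  simp

lemma coord_pair_integrable :
    Integrable (fun u : EuclideanSpace ℝ (Fin d) => (u i) ^ 2 * (u j) ^ 2)
      (stdGaussianVec d) := by
  have h := pi_integrable (ι := Fin d)
    (fun k x => (if k = i then x ^ 2 else 1) * (if k = j then x ^ 2 else 1)) ?_
  · rw [stdGaussianVec, integrable_map_equiv]
    apply h.congr
    filter_upwards with u
    exact (coord_pair_eq i j (WithLp.toLp 2 u)).symm
  · intro k
    by_cases h1 : k = i <;> by_cases h2 : k = j
    · simp only [if_pos h1, if_pos h2]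
      have := integrable_pow_gaussianReal 4
      apply this.congr; filter_upwards with x; ring
    · simp only [if_pos h1, if_neg h2, mul_one]
      exact integrable_pow_gaussianReal 2
    · simp only [if_neg h1, if_pos h2, one_mul]
      exact integrable_pow_gaussianReal 2
    · simp only [if_neg h1, if_neg h2, mul_one]
      exact integrable_const 1

lemma coord_pair_integral :
    ∫ u, (u i) ^ 2 * (u j) ^ 2 ∂(stdGaussianVec d) = if i = j then 3 else 1 := by
  have heq : ∫ u, (u i) ^ 2 * (u j) ^ 2 ∂(stdGaussianVec d)
      = ∫ u : EuclideanSpace ℝ (Fin d),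
          ∏ k, ((if k = i then (u k) ^ 2 else 1) * (if k = j then (u k) ^ 2 else 1))
          ∂(stdGaussianVec d) := by
    congr 1; funext u; exact coord_pair_eq i j u
  have h2 : ∫ u : EuclideanSpace ℝ (Fin d),
      ∏ k, ((if k = i then (u k) ^ 2 else 1) * (if k = j then (u k) ^ 2 else 1))
        ∂(stdGaussianVec d)
      = ∏ k, ∫ x, (if k = i then x ^ 2 else 1) * (if k = j then x ^ 2 else 1)
          ∂(gaussianReal 0 1) :=
    by
      rw [stdGaussianVec, integral_map_equiv]
      exact pi_integral (ι := Fin d)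
        (fun k x => (if k = i then x ^ 2 else 1) * (if k = j then x ^ 2 else 1))
  rw [heq, h2]
  have hval : ∀ k : Fin d, (∫ x, (if k = i then x ^ 2 else 1) * (if k = j then x ^ 2 else 1)
      ∂(gaussianReal 0 1)) = if k = i ∧ k = j then 3 else 1 := by
    intro k
    by_cases hki : k = i <;> by_cases hkj : k = j
    · simp only [if_pos hki, if_pos hkj]
      rw [if_pos (⟨hki, hkj⟩ : k = i ∧ k = j)]
      rw [show (fun x : ℝ => x ^ 2 * x ^ 2) = fun x : ℝ => x ^ 4 by funext x; ring, gauss_m4]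
    · simp only [if_pos hki, if_neg hkj, mul_one]
      rw [if_neg (by tauto : ¬(k = i ∧ k = j))]
      exact gauss_m2
    · simp only [if_neg hki, if_pos hkj, one_mul]
      rw [if_neg (by tauto : ¬(k = i ∧ k = j))]
      exact gauss_m2
    · simp only [if_neg hki, if_neg hkj, mul_one]
      rw [if_neg (by tauto : ¬(k = i ∧ k = j))]
      simp
  rw [Finset.prod_congr rfl (fun k _ => hval k)]
  by_cases hij : i = j
  · subst hij
    rw [show (fun k : Fin d => if k = i ∧ k = i then (3:ℝ) else 1)
        = fun k => if k = i then (3:ℝ) else 1 by funext k; simp]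
    rw [Finset.prod_ite_eq' Finset.univ i (fun _ => (3:ℝ))]
    simp
  · rw [Finset.prod_eq_one]
    · simp [hij]
    intro k _
    rw [if_neg]
    rintro ⟨rfl, rfl⟩
    exact hij rfl

lemma coord_sq_integrable :
    Integrable (fun u : EuclideanSpace ℝ (Fin d) => (u i) ^ 2) (stdGaussianVec d) := by
  have h := pi_integrable (ι := Fin d) (fun k x => if k = i then x ^ 2 else 1) ?_
  · rw [stdGaussianVec, integrable_map_equiv]
    apply h.congr
    filter_upwards with u
    rw [Finset.prod_ite_eq' Finset.univ i (fun k => (u k)^2)]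
    simp
  · intro k
    by_cases h1 : k = i
    · simp only [if_pos h1]; exact integrable_pow_gaussianReal 2
    · simp only [if_neg h1]; exact integrable_const 1

lemma coord_sq_integral :
    ∫ u, (u i) ^ 2 ∂(stdGaussianVec d) = 1 := by
  have heq : ∫ u, (u i) ^ 2 ∂(stdGaussianVec d)
      = ∫ u : EuclideanSpace ℝ (Fin d), ∏ k, (if k = i then (u k) ^ 2 else 1)
          ∂(stdGaussianVec d) := by
    congr 1; funext u
    rw [Finset.prod_ite_eq' Finset.univ i (fun k => (u k)^2)]
    simp
  have h2 : ∫ u : EuclideanSpace ℝ (Fin d), ∏ k, (if k = i then (u k) ^ 2 else 1)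
        ∂(stdGaussianVec d)
      = ∏ k, ∫ x, (if k = i then x ^ 2 else 1) ∂(gaussianReal 0 1) :=
    by rw [stdGaussianVec, integral_map_equiv]; exact pi_integral (ι := Fin d) (fun k x => if k = i then x ^ 2 else 1)
  rw [heq, h2]
  have hval : ∀ k : Fin d, (∫ x, (if k = i then x ^ 2 else 1) ∂(gaussianReal 0 1))
      = if k = i then 1 else 1 := by
    intro k
    by_cases h1 : k = i
    · simp only [if_pos h1]; exact gauss_m2
    · simp only [if_neg h1]; simp
  rw [Finset.prod_congr rfl (fun k _ => hval k)]
  simp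

end Coord

theorem zo_estimate_second_moment_bound (d : ℕ) (G Δ ε : ℝ)
    (hG : 0 ≤ G) (hΔ : 0 < Δ) (hε : 0 < ε)
    (L : EuclideanSpace ℝ (Fin d) → ℝ)
    (hL : ∀ z z', |L z - L z'| ≤ G * ‖z - z'‖)
    (Q : EuclideanSpace ℝ (Fin d) → EuclideanSpace ℝ (Fin d))
    (hQ : ∀ x y, ‖Q x - Q y‖ ≤ ‖x - y‖ + Δ * Real.sqrt d)
    (W : EuclideanSpace ℝ (Fin d)) :
    ∫ u, ‖((L (Q (W + ε • u)) - L (Q (W - ε • u))) / (2 * ε)) • u‖ ^ 2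
        ∂(stdGaussianVec d) ≤
      2 * G ^ 2 * ((d : ℝ) ^ 2 + 2 * d) + G ^ 2 * Δ ^ 2 * (d : ℝ) ^ 2 / (2 * ε ^ 2) := by
  set C : ℝ := G ^ 2 * Δ ^ 2 * d / (2 * ε ^ 2) with hCdef
  have hC : C * (2 * ε ^ 2) = G ^ 2 * Δ ^ 2 * d := by
    rw [hCdef]; field_simp
  have hnorm : ∀ u : EuclideanSpace ℝ (Fin d), ‖u‖ ^ 2 = ∑ i, (u i) ^ 2 := by
    intro u
    rw [EuclideanSpace.norm_eq, Real.sq_sqrt (by positivity)]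
    simp [sq_abs]
  have hS_int : Integrable (fun u : EuclideanSpace ℝ (Fin d) => ∑ i, (u i) ^ 2)
      (stdGaussianVec d) :=
    integrable_finset_sum _ (fun i _ => coord_sq_integrable i)
  have hS_val : ∫ u, (∑ i, (u i) ^ 2) ∂(stdGaussianVec d) = d := by
    rw [integral_finset_sum _ (fun i _ => coord_sq_integrable i)]
    simp [coord_sq_integral]
  have hexp : ∀ u : EuclideanSpace ℝ (Fin d),
      (∑ i, (u i) ^ 2) ^ 2 = ∑ i, ∑ j, (u i) ^ 2 * (u j) ^ 2 := by
    intro u; rw [sq, Finset.sum_mul_sum]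
  have hS2_int : Integrable (fun u : EuclideanSpace ℝ (Fin d) => (∑ i, (u i) ^ 2) ^ 2)
      (stdGaussianVec d) := by
    have : Integrable (fun u : EuclideanSpace ℝ (Fin d) => ∑ i, ∑ j, (u i) ^ 2 * (u j) ^ 2)
        (stdGaussianVec d) :=
      integrable_finset_sum _ (fun i _ => integrable_finset_sum _
        (fun j _ => coord_pair_integrable i j))
    apply this.congr
    filter_upwards with u
    exact (hexp u).symm
  have hS2_val : ∫ u, (∑ i, (u i) ^ 2) ^ 2 ∂(stdGaussianVec d) = (d : ℝ) ^ 2 + 2 * d := by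
    have h1 : ∫ u, (∑ i, (u i) ^ 2) ^ 2 ∂(stdGaussianVec d)
        = ∫ u, (∑ i, ∑ j, (u i) ^ 2 * (u j) ^ 2) ∂(stdGaussianVec d) := by
      congr 1; funext u; exact hexp u
    rw [h1, integral_finset_sum _ (fun i _ => integrable_finset_sum _
      (fun j _ => coord_pair_integrable i j))]
    have h2 : ∀ i : Fin d, ∫ u, (∑ j, (u i) ^ 2 * (u j) ^ 2) ∂(stdGaussianVec d)
        = (d : ℝ) + 2 := by
      intro i
      rw [integral_finset_sum _ (fun j _ => coord_pair_integrable i j)]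
      have : ∀ j : Fin d, (∫ u, (u i) ^ 2 * (u j) ^ 2 ∂(stdGaussianVec d))
          = 1 + if i = j then (2:ℝ) else 0 := by
        intro j
        rw [coord_pair_integral i j]
        by_cases h : i = j <;> simp [h] <;> norm_num
      rw [Finset.sum_congr rfl (fun j _ => this j), Finset.sum_add_distrib,
        Finset.sum_ite_eq Finset.univ i (fun _ => (2:ℝ))]
      simp [add_comm]
    rw [Finset.sum_congr rfl (fun i _ => h2 i)]
    simp
    ring
  have hg_int : Integrable (fun u : EuclideanSpace ℝ (Fin d) =>
      2 * G ^ 2 * (∑ i, (u i) ^ 2) ^ 2 + C * (∑ i, (u i) ^ 2)) (stdGaussianVec d) :=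
    (hS2_int.const_mul _).add (hS_int.const_mul _)
  have hg_val : ∫ u, (2 * G ^ 2 * (∑ i, (u i) ^ 2) ^ 2 + C * (∑ i, (u i) ^ 2))
      ∂(stdGaussianVec d) = 2 * G ^ 2 * ((d : ℝ) ^ 2 + 2 * d) + C * d := by
    rw [integral_add (hS2_int.const_mul _) (hS_int.const_mul _),
      integral_const_mul, integral_const_mul, hS_val, hS2_val]
  have hpt : ∀ u : EuclideanSpace ℝ (Fin d),
      ‖((L (Q (W + ε • u)) - L (Q (W - ε • u))) / (2 * ε)) • u‖ ^ 2
        ≤ 2 * G ^ 2 * (∑ i, (u i) ^ 2) ^ 2 + C * (∑ i, (u i) ^ 2) := by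
    intro u
    set a := W + ε • u
    set b := W - ε • u
    set D := L (Q a) - L (Q b) with hDdef
    have hab : a - b = (2 * ε) • u := by
      rw [show a - b = W + ε • u - (W - ε • u) from rfl]
      module
    have habn : ‖a - b‖ = 2 * ε * ‖u‖ := by
      rw [hab, norm_smul, Real.norm_eq_abs, abs_of_pos (by linarith)]
    have hD : |D| ≤ G * (2 * ε * ‖u‖ + Δ * Real.sqrt d) := by
      calc |D| ≤ G * ‖Q a - Q b‖ := hL _ _
        _ ≤ G * (‖a - b‖ + Δ * Real.sqrt d) := by
            exact mul_le_mul_of_nonneg_left (hQ a b) hG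
        _ = G * (2 * ε * ‖u‖ + Δ * Real.sqrt d) := by rw [habn]
    have hd : Real.sqrt d ^ 2 = (d : ℝ) := Real.sq_sqrt (Nat.cast_nonneg d)
    have hD2 : D ^ 2 ≤ 8 * G ^ 2 * ε ^ 2 * ‖u‖ ^ 2 + 2 * G ^ 2 * Δ ^ 2 * d := by
      have h1 : D ^ 2 ≤ (G * (2 * ε * ‖u‖ + Δ * Real.sqrt d)) ^ 2 :=
        sq_le_sq' (neg_le_of_abs_le hD) (le_of_abs_le hD)
      rw [← hd]
      nlinarith [h1, mul_nonneg (sq_nonneg G) (sq_nonneg (2 * ε * ‖u‖ - Δ * Real.sqrt d))]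
    rw [← hnorm u, norm_smul, Real.norm_eq_abs, mul_pow, sq_abs, div_pow,
      div_mul_eq_mul_div, div_le_iff₀ (by positivity : (0:ℝ) < (2 * ε) ^ 2)]
    have hkey : D ^ 2 * ‖u‖ ^ 2
        ≤ (8 * G ^ 2 * ε ^ 2 * ‖u‖ ^ 2 + 2 * G ^ 2 * Δ ^ 2 * d) * ‖u‖ ^ 2 :=
      mul_le_mul_of_nonneg_right hD2 (sq_nonneg _)
    have hC2 : C * (2 * ε ^ 2) * ‖u‖ ^ 2 = G ^ 2 * Δ ^ 2 * d * ‖u‖ ^ 2 := by rw [hC]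
    nlinarith [hkey, hC2, sq_nonneg ‖u‖, sq_nonneg (‖u‖ ^ 2)]
  calc ∫ u, ‖((L (Q (W + ε • u)) - L (Q (W - ε • u))) / (2 * ε)) • u‖ ^ 2
      ∂(stdGaussianVec d)
      ≤ ∫ u, (2 * G ^ 2 * (∑ i, (u i) ^ 2) ^ 2 + C * (∑ i, (u i) ^ 2))
          ∂(stdGaussianVec d) :=
        integral_mono_of_nonneg (ae_of_all _ (fun u => by positivity)) hg_int
          (ae_of_all _ hpt)
    _ = 2 * G ^ 2 * ((d : ℝ) ^ 2 + 2 * d) + C * d := hg_val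
    _ = 2 * G ^ 2 * ((d : ℝ) ^ 2 + 2 * d) + G ^ 2 * Δ ^ 2 * (d : ℝ) ^ 2 / (2 * ε ^ 2) := by
        rw [hCdef]; field_simp
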